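/- Let G be a graph on n vertices with average degree d = 2e(G)/n. If d ≥ 2√n, then G contains at least d⁴/36 copies of the 4-cycle C₄. -/

import Mathlib

open SimpleGraph Finset

section AuxC4

variable {n : ℕ}

def C4sub (G : SimpleGraph (Fin n)) (x y u v : Fin n) : G.Subgraph where
  verts := {x, u, y, v}
  Adj a b := (s(a, b) = s(x, u) ∨ s(a, b) = s(u, y) ∨ s(a, b) = s(y, v) ∨ s(a, b) = s(v, x))
    ∧ G.Adj a b
  adj_sub h := h.2
  edge_vert := by
    rintro a b ⟨h | h | h | h, -⟩ <;> rw [Sym2.eq_iff] at h <;>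
      rcases h with ⟨rfl, rfl⟩ | ⟨rfl, rfl⟩ <;> simp [Set.mem_insert_iff]
  symm := by
    constructor
    rintro a b ⟨h, hG⟩
    exact ⟨by rwa [Sym2.eq_swap] at h, hG.symm⟩

lemma C4sub_iso (G : SimpleGraph (Fin n)) (x y u v : Fin n) (hxy : x ≠ y) (huv : u ≠ v)
    (hxu : G.Adj x u) (hxv : G.Adj x v) (hyu : G.Adj y u) (hyv : G.Adj y v) :
    Nonempty ((C4sub G x y u v).coe ≃g cycleGraph 4) := by
  classical
  have hxu' := hxu.ne
  have hxv' := hxv.ne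
  have hyu' := hyu.ne
  have hyv' := hyv.ne
  have hux : u ≠ x := hxu'.symm
  have hvx : v ≠ x := hxv'.symm
  have huy : u ≠ y := hyu'.symm
  have hvy : v ≠ y := hyv'.symm
  have hyx : y ≠ x := hxy.symm
  have hvu : v ≠ u := huv.symm
  set H := C4sub G x y u v with hH
  have hmx : x ∈ H.verts := by simp [hH, C4sub]
  have hmu : u ∈ H.verts := by simp [hH, C4sub]
  have hmy : y ∈ H.verts := by simp [hH, C4sub]
  have hmv : v ∈ H.verts := by simp [hH, C4sub]
  let f : Fin 4 → H.verts := ![⟨x, hmx⟩, ⟨u, hmu⟩, ⟨y, hmy⟩, ⟨v, hmv⟩]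
  let g : H.verts → Fin 4 := fun a =>
    if a.1 = x then 0 else if a.1 = u then 1 else if a.1 = y then 2 else 3
  have hgf : ∀ i, g (f i) = i := by
    intro i
    fin_cases i <;> simp [f, g, hux, huy, hyx, hvx, hvu, hvy, hxy, huv, hxu', hxv', hyu', hyv']
  have hfg : ∀ a, f (g a) = a := by
    rintro ⟨a, ha⟩
    have : a = x ∨ a = u ∨ a = y ∨ a = v := by
      simpa [hH, C4sub, Set.mem_insert_iff] using ha
    rcases this with rfl | rfl | rfl | rfl <;>
      simp [f, g, hux, huy, hyx, hvx, hvu, hvy, hxy, huv, hxu', hxv', hyu', hyv']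
  let e : Fin 4 ≃ H.verts := ⟨f, g, hgf, hfg⟩
  refine ⟨RelIso.symm ⟨e, ?_⟩⟩
  rintro a b
  fin_cases a <;> fin_cases b <;>
    simp [e, f, hH, C4sub, Sym2.eq_iff, cycleGraph_adj, Subgraph.coe_adj,
      hxy, hxu', hxv', hyu', hyv', huv, hux, huy, hyx, hvx, hvu, hvy,
      hxu, hxv, hyu, hyv, hxu.symm, hxv.symm, hyu.symm, hyv.symm] <;> decide

set_option maxHeartbeats 2000000 in
lemma C4sub_fiber (G : SimpleGraph (Fin n)) {x y u v x' y' u' v' : Fin n}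
    (hxy : x ≠ y) (huv : u ≠ v) (hxu : G.Adj x u) (hxv : G.Adj x v)
    (hyu : G.Adj y u) (hyv : G.Adj y v)
    (hxy2 : x' ≠ y') (huv2 : u' ≠ v') (hxu2 : G.Adj x' u') (hxv2 : G.Adj x' v')
    (hyu2 : G.Adj y' u') (hyv2 : G.Adj y' v')
    (hEq : C4sub G x y u v = C4sub G x' y' u' v') :
    (x' = x ∧ y' = y ∧ u' = u ∧ v' = v) ∨ (x' = x ∧ y' = y ∧ u' = v ∧ v' = u) ∨
    (x' = y ∧ y' = x ∧ u' = u ∧ v' = v) ∨ (x' = y ∧ y' = x ∧ u' = v ∧ v' = u) ∨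
    (x' = u ∧ y' = v ∧ u' = x ∧ v' = y) ∨ (x' = u ∧ y' = v ∧ u' = y ∧ v' = x) ∨
    (x' = v ∧ y' = u ∧ u' = x ∧ v' = y) ∨ (x' = v ∧ y' = u ∧ u' = y ∧ v' = x) := by
  have hxu' := hxu.ne
  have hxv' := hxv.ne
  have hyu' := hyu.ne
  have hyv' := hyv.ne
  have hux : u ≠ x := hxu'.symm
  have hvx : v ≠ x := hxv'.symm
  have huy : u ≠ y := hyu'.symm
  have hvy : v ≠ y := hyv'.symm
  have hyx : y ≠ x := hxy.symm
  have hvu : v ≠ u := huv.symm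
  have hxu2' := hxu2.ne
  have hxv2' := hxv2.ne
  have hyu2' := hyu2.ne
  have hyv2' := hyv2.ne
  have e1 : (C4sub G x y u v).Adj x' u' := by rw [hEq]; exact ⟨Or.inl rfl, hxu2⟩
  have e2 : (C4sub G x y u v).Adj u' y' := by rw [hEq]; exact ⟨Or.inr (Or.inl rfl), hyu2.symm⟩
  have e3 : (C4sub G x y u v).Adj y' v' := by
    rw [hEq]; exact ⟨Or.inr (Or.inr (Or.inl rfl)), hyv2⟩
  have e4 : (C4sub G x y u v).Adj v' x' := by
    rw [hEq]; exact ⟨Or.inr (Or.inr (Or.inr rfl)), hxv2.symm⟩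
  have d1 := e1.1
  have d2 := e2.1
  have d3 := e3.1
  have d4 := e4.1
  simp only [Sym2.eq_iff] at d1 d2 d3 d4
  clear e1 e2 e3 e4 hEq hxu hxv hyu hyv hxu2 hxv2 hyu2 hyv2
  rcases d1 with (⟨rfl, rfl⟩ | ⟨rfl, rfl⟩) | (⟨rfl, rfl⟩ | ⟨rfl, rfl⟩) |
    (⟨rfl, rfl⟩ | ⟨rfl, rfl⟩) | (⟨rfl, rfl⟩ | ⟨rfl, rfl⟩) <;>
    simp_all <;> tauto

/-- Number of copies of `C₄` in `G`: the number of subgraphs isomorphic to the 4-cycle. -/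
noncomputable def numC4 {V : Type} (G : SimpleGraph V) : ℕ :=
  Nat.card {H : G.Subgraph // Nonempty (H.coe ≃g SimpleGraph.cycleGraph 4)}

instance (G : SimpleGraph (Fin n)) : Finite G.Subgraph := by
  have : Function.Injective (fun H : G.Subgraph => (H.verts, H.Adj)) := by
    intro H1 H2 h
    simp only [Prod.mk.injEq] at h
    exact SimpleGraph.Subgraph.ext h.1 h.2
  exact Finite.of_injective _ this

open Classical in
set_option maxHeartbeats 1600000 in
lemma card_Q_le (G : SimpleGraph (Fin n)) :
    (univ.filter fun t : (Fin n × Fin n) × Fin n × Fin n =>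
      t.1.1 ≠ t.1.2 ∧ t.2.1 ≠ t.2.2 ∧ G.Adj t.1.1 t.2.1 ∧ G.Adj t.1.1 t.2.2 ∧
        G.Adj t.1.2 t.2.1 ∧ G.Adj t.1.2 t.2.2).card ≤ 8 * numC4 G := by
  classical
  set s := univ.filter fun t : (Fin n × Fin n) × Fin n × Fin n =>
      t.1.1 ≠ t.1.2 ∧ t.2.1 ≠ t.2.2 ∧ G.Adj t.1.1 t.2.1 ∧ G.Adj t.1.1 t.2.2 ∧
        G.Adj t.1.2 t.2.1 ∧ G.Adj t.1.2 t.2.2 with hs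
  set F : (Fin n × Fin n) × Fin n × Fin n → G.Subgraph :=
    fun t => C4sub G t.1.1 t.1.2 t.2.1 t.2.2 with hF
  have hfib : ∀ H ∈ s.image F, (s.filter fun t => F t = H).card ≤ 8 := by
    intro H hH
    obtain ⟨t, ht, rfl⟩ := mem_image.mp hH
    obtain ⟨⟨x, y⟩, u, v⟩ := t
    simp only [hs, mem_filter, mem_univ, true_and] at ht
    obtain ⟨hxy, huv, hxu, hxv, hyu, hyv⟩ := ht
    have hsub : (s.filter fun t => F t = F ((x, y), u, v)) ⊆
        {((x, y), u, v), ((x, y), v, u), ((y, x), u, v), ((y, x), v, u),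
         ((u, v), x, y), ((u, v), y, x), ((v, u), x, y), ((v, u), y, x)} := by
      intro t' ht'
      simp only [hs, mem_filter, mem_univ, true_and] at ht'
      obtain ⟨⟨hxy2, huv2, hxu2, hxv2, hyu2, hyv2⟩, hFeq⟩ := ht'
      obtain ⟨⟨x', y'⟩, u', v'⟩ := t'
      have := C4sub_fiber G hxy huv hxu hxv hyu hyv hxy2 huv2 hxu2 hxv2 hyu2 hyv2 hFeq.symm
      rcases this with ⟨rfl, rfl, rfl, rfl⟩ | ⟨rfl, rfl, rfl, rfl⟩ | ⟨rfl, rfl, rfl, rfl⟩ |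
        ⟨rfl, rfl, rfl, rfl⟩ | ⟨rfl, rfl, rfl, rfl⟩ | ⟨rfl, rfl, rfl, rfl⟩ |
        ⟨rfl, rfl, rfl, rfl⟩ | ⟨rfl, rfl, rfl, rfl⟩ <;> simp [mem_insert]
    calc (s.filter fun t => F t = F ((x, y), u, v)).card
        ≤ _ := Finset.card_le_card hsub
      _ ≤ 8 := by
          apply le_trans (Finset.card_insert_le _ _)
          apply Nat.succ_le_succ
          apply le_trans (Finset.card_insert_le _ _)
          apply Nat.succ_le_succ
          apply le_trans (Finset.card_insert_le _ _)
          apply Nat.succ_le_succ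
          apply le_trans (Finset.card_insert_le _ _)
          apply Nat.succ_le_succ
          apply le_trans (Finset.card_insert_le _ _)
          apply Nat.succ_le_succ
          apply le_trans (Finset.card_insert_le _ _)
          apply Nat.succ_le_succ
          apply le_trans (Finset.card_insert_le _ _)
          apply Nat.succ_le_succ
          simp
  have h1 : s.card ≤ 8 * (s.image F).card := Finset.card_le_mul_card_image s 8 hfib
  have h2 : (s.image F).card ≤ numC4 G := by
    haveI : Fintype {H : G.Subgraph // Nonempty (H.coe ≃g cycleGraph 4)} := Fintype.ofFinite _
    rw [numC4, Nat.card_eq_fintype_card]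
    have hmaps : ∀ H ∈ s.image F, Nonempty (H.coe ≃g cycleGraph 4) := by
      intro H hH
      obtain ⟨t, ht, rfl⟩ := mem_image.mp hH
      simp only [hs, mem_filter, mem_univ, true_and] at ht
      obtain ⟨hxy, huv, hxu, hxv, hyu, hyv⟩ := ht
      exact C4sub_iso G _ _ _ _ hxy huv hxu hxv hyu hyv
    calc (s.image F).card
        = (s.image F).attach.card := Finset.card_attach.symm
      _ ≤ (univ : Finset {H : G.Subgraph // Nonempty (H.coe ≃g cycleGraph 4)}).card := by
          apply Finset.card_le_card_of_injOn
            (fun H => (⟨H.1, hmaps H.1 H.2⟩ : {H : G.Subgraph // Nonempty (H.coe ≃g cycleGraph 4)}))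
          · intro a ha
            exact mem_univ _
          · intro a ha b hb hab
            exact Subtype.ext (by simpa using congrArg Subtype.val hab)
      _ = Fintype.card _ := Finset.card_univ
  omega

open Classical in
noncomputable def ccount (G : SimpleGraph (Fin n)) (p : Fin n × Fin n) : ℕ :=
  (univ.filter fun w => G.Adj p.1 w ∧ G.Adj p.2 w).card

open Classical in
noncomputable def dcount (G : SimpleGraph (Fin n)) (v : Fin n) : ℕ :=
  (univ.filter fun w => G.Adj v w).card

open Classical in
lemma claim2 (G : SimpleGraph (Fin n)) :
    (univ.filter fun t : (Fin n × Fin n) × Fin n × Fin n =>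
      t.1.1 ≠ t.1.2 ∧ t.2.1 ≠ t.2.2 ∧ G.Adj t.1.1 t.2.1 ∧ G.Adj t.1.1 t.2.2 ∧
        G.Adj t.1.2 t.2.1 ∧ G.Adj t.1.2 t.2.2).card
    = ∑ p ∈ univ.offDiag, (ccount G p * ccount G p - ccount G p) := by
  classical
  rw [Finset.card_eq_sum_card_fiberwise (f := Prod.fst) (t := univ.offDiag)
    (fun t ht => by simp only [mem_coe, mem_filter] at ht; simp [mem_offDiag, ht.2.1])]
  refine Finset.sum_congr rfl fun p hp => ?_
  simp only [ccount]
  rw [← Finset.offDiag_card]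
  refine Finset.card_bij' (fun t _ => t.2) (fun q _ => (p, q)) ?_ ?_ ?_ ?_
  · intro t ht
    simp only [mem_filter, mem_univ, true_and] at ht
    obtain ⟨⟨h1, h2, h3, h4, h5, h6⟩, h7⟩ := ht
    subst h7
    simp only [mem_offDiag, mem_filter, mem_univ, true_and]
    tauto
  · intro q hq
    simp only [mem_offDiag, mem_filter, mem_univ, true_and] at hq
    simp only [mem_offDiag, mem_univ, true_and] at hp
    simp only [mem_filter, mem_univ, true_and]
    tauto
  · intro t ht
    simp only [mem_filter] at ht
    obtain ⟨-, h7⟩ := ht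
    subst h7
    rfl
  · intro q hq
    rfl

open Classical in
lemma claim3 (G : SimpleGraph (Fin n)) :
    ∑ p ∈ univ.offDiag, ccount G p
    = ∑ v : Fin n, (dcount G v * dcount G v - dcount G v) := by
  classical
  have key : ((univ.offDiag ×ˢ univ).filter fun q : (Fin n × Fin n) × Fin n =>
      G.Adj q.1.1 q.2 ∧ G.Adj q.1.2 q.2).card = ∑ p ∈ univ.offDiag, ccount G p := by
    rw [Finset.card_eq_sum_card_fiberwise (f := Prod.fst) (t := univ.offDiag)
      (fun t ht => by simp only [mem_coe, mem_filter, mem_product] at ht; exact ht.1.1)]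
    refine Finset.sum_congr rfl fun p hp => ?_
    simp only [ccount]
    refine Finset.card_bij' (fun t _ => t.2) (fun q _ => (p, q)) ?_ ?_ ?_ ?_
    · intro t ht
      simp only [mem_filter, mem_product] at ht
      obtain ⟨⟨⟨-, -⟩, h1, h2⟩, h7⟩ := ht
      subst h7
      simp only [mem_filter, mem_univ, true_and]
      tauto
    · intro q hq
      simp only [mem_filter, mem_univ, true_and] at hq
      simp only [mem_filter, mem_product, mem_univ, and_true, true_and]
      exact ⟨hp, hq.1, hq.2⟩
    · intro t ht
      simp only [mem_filter] at ht
      obtain ⟨-, h7⟩ := ht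
      subst h7
      rfl
    · intro q hq
      rfl
  have key2 : ((univ.offDiag ×ˢ univ).filter fun q : (Fin n × Fin n) × Fin n =>
      G.Adj q.1.1 q.2 ∧ G.Adj q.1.2 q.2).card
      = ∑ v : Fin n, (dcount G v * dcount G v - dcount G v) := by
    rw [Finset.card_eq_sum_card_fiberwise (f := Prod.snd) (t := univ)
      (fun t _ => mem_univ _)]
    refine Finset.sum_congr rfl fun v _ => ?_
    have hdv : dcount G v * dcount G v - dcount G v
        = ((univ.filter fun w => G.Adj v w).offDiag).card := by
      rw [Finset.offDiag_card]
      simp only [dcount]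
    rw [hdv]
    refine Finset.card_bij' (fun t _ => t.1) (fun q _ => (q, v)) ?_ ?_ ?_ ?_
    · intro t ht
      simp only [mem_filter, mem_product, mem_offDiag, mem_univ, true_and, and_true] at ht
      obtain ⟨⟨hne, h2, h3⟩, h7⟩ := ht
      subst h7
      simp only [mem_offDiag, mem_filter, mem_univ, true_and]
      exact ⟨h2.symm, h3.symm, hne⟩
    · intro q hq
      simp only [mem_offDiag, mem_filter, mem_univ, true_and] at hq
      simp only [mem_filter, mem_product, mem_offDiag, mem_univ, true_and, and_true]
      exact ⟨hq.2.2, hq.1.symm, hq.2.1.symm⟩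
    · intro t ht
      simp only [mem_filter] at ht
      obtain ⟨-, h7⟩ := ht
      subst h7
      rfl
    · intro q hq
      rfl
  rw [← key, key2]

open Classical in
lemma claim4 (G : SimpleGraph (Fin n)) :
    ∑ v : Fin n, dcount G v = 2 * Nat.card G.edgeSet := by
  classical
  have h1 : ∀ v, dcount G v = G.degree v := by
    intro v
    rw [SimpleGraph.degree, neighborFinset_eq_filter]
    simp only [dcount]
  simp only [h1]
  rw [SimpleGraph.sum_degrees_eq_twice_card_edges]
  congr 1
  rw [Nat.card_coe_set_eq, Set.ncard_eq_toFinset_card']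
  congr 1

lemma cast_mul_sub (c : ℕ) : ((c * c - c : ℕ) : ℝ) = (c : ℝ) ^ 2 - c := by
  rcases Nat.eq_zero_or_pos c with rfl | hc
  · simp
  · rw [Nat.cast_sub (Nat.le_mul_of_pos_left c hc)]
    push_cast
    ring


end AuxC4

set_option maxHeartbeats 2000000 in
/-- If a graph `G` on `n` vertices has average degree `d = 2e(G)/n ≥ 2√n`, then `G`
contains at least `d⁴/36` copies of `C₄`. -/
theorem statement_4 (n : ℕ) (G : SimpleGraph (Fin n)) (d : ℝ)
    (hd : d = 2 * (Nat.card G.edgeSet : ℝ) / n)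
    (h : 2 * Real.sqrt n ≤ d) :
    d ^ 4 / 36 ≤ (numC4 G : ℝ) := by
  classical
  rcases Nat.eq_zero_or_pos n with rfl | hn
  · norm_num at hd
    rw [hd]
    simpa using Nat.cast_nonneg (numC4 G)
  rcases eq_or_lt_of_le (Nat.succ_le_of_lt hn) with hn1 | hn2
  · -- n = 1 : contradiction
    exfalso
    subst hn1
    have he : G.edgeSet = ∅ := by
      ext e
      induction e using Sym2.ind with
      | _ a b =>
        simp only [Set.mem_empty_iff_false, iff_false, mem_edgeSet]
        intro hab
        exact hab.ne (Subsingleton.elim a b)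
    rw [he] at hd
    simp at hd
    rw [hd] at h
    norm_num [Real.sqrt_one] at h
  have hn2' : (2 : ℕ) ≤ n := hn2
  have hnR : (2:ℝ) ≤ (n:ℝ) := by exact_mod_cast hn2'
  have hn0 : (0:ℝ) < n := by linarith
  set r := Real.sqrt n with hr
  have hr2 : r ^ 2 = n := Real.sq_sqrt (by positivity)
  have hrs : Real.sqrt 2 ≤ r := Real.sqrt_le_sqrt hnR
  have hs14 : (1.414 : ℝ) ≤ Real.sqrt 2 := by
    rw [show (1.414:ℝ) = Real.sqrt (1.414^2) by rw [Real.sqrt_sq]; norm_num]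
    exact Real.sqrt_le_sqrt (by norm_num)
  have hr14 : (1.414 : ℝ) ≤ r := le_trans hs14 hrs
  have hdr : 2 * r ≤ d := h
  have hr0 : (0:ℝ) ≤ r := Real.sqrt_nonneg _
  have hd28 : (2.828 : ℝ) ≤ d := by linarith
  have hd4n : 4 * (n:ℝ) ≤ d ^ 2 := by nlinarith
  -- degree sum
  have hsumdeg : (∑ v : Fin n, (dcount G v : ℝ)) = n * d := by
    have h4 := claim4 G
    have hc : (∑ v : Fin n, (dcount G v : ℝ)) = 2 * (Nat.card G.edgeSet : ℝ) := by
      exact_mod_cast h4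
    rw [hc, hd]
    field_simp
  set A : ℝ := ∑ p ∈ univ.offDiag, (ccount G p : ℝ) with hA
  have hAP2 : A = ∑ v : Fin n, ((dcount G v : ℝ) ^ 2 - dcount G v) := by
    rw [hA, ← Nat.cast_sum, claim3 G, Nat.cast_sum]
    exact Finset.sum_congr rfl fun v _ => cast_mul_sub _
  have hCS1 : (∑ v : Fin n, (dcount G v : ℝ)) ^ 2
      ≤ n * ∑ v : Fin n, (dcount G v : ℝ) ^ 2 := by
    have := sq_sum_le_card_mul_sum_sq (s := (univ : Finset (Fin n)))
      (f := fun v => (dcount G v : ℝ))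
    simpa using this
  have hS2 : (n:ℝ) * d^2 ≤ ∑ v : Fin n, (dcount G v : ℝ)^2 := by
    rw [hsumdeg] at hCS1
    have h' : (n:ℝ) * ((n:ℝ)*d^2) ≤ (n:ℝ) * (∑ v : Fin n, (dcount G v:ℝ)^2) := by
      nlinarith [hCS1]
    exact (mul_le_mul_iff_right₀ hn0).mp h'
  have hAlow : n * d ^ 2 - n * d ≤ A := by
    rw [hAP2, Finset.sum_sub_distrib, hsumdeg]
    linarith
  set T : ℝ := ((univ.filter fun t : (Fin n × Fin n) × Fin n × Fin n =>
      t.1.1 ≠ t.1.2 ∧ t.2.1 ≠ t.2.2 ∧ G.Adj t.1.1 t.2.1 ∧ G.Adj t.1.1 t.2.2 ∧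
        G.Adj t.1.2 t.2.1 ∧ G.Adj t.1.2 t.2.2).card : ℝ) with hT
  have hTeq : T = (∑ p ∈ univ.offDiag, (ccount G p : ℝ) ^ 2) - A := by
    rw [hT, claim2 G, hA, Nat.cast_sum, ← Finset.sum_sub_distrib]
    exact Finset.sum_congr rfl fun p _ => cast_mul_sub _
  have hccnonneg : (0:ℝ) ≤ ∑ p ∈ univ.offDiag, (ccount G p : ℝ) ^ 2 :=
    Finset.sum_nonneg fun p _ => sq_nonneg _
  have hCS2 : A ^ 2 ≤ (n:ℝ) ^ 2 * ∑ p ∈ univ.offDiag, (ccount G p : ℝ) ^ 2 := by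
    have hcs := sq_sum_le_card_mul_sum_sq (s := (univ : Finset (Fin n)).offDiag)
      (f := fun p : Fin n × Fin n => (ccount G p : ℝ))
    have hcard : (((univ : Finset (Fin n)).offDiag.card : ℕ) : ℝ) ≤ (n:ℝ)^2 := by
      rw [Finset.offDiag_card, Finset.card_univ, Fintype.card_fin, cast_mul_sub]
      nlinarith
    calc A ^ 2 ≤ ((univ : Finset (Fin n)).offDiag.card : ℝ)
          * ∑ p ∈ univ.offDiag, (ccount G p : ℝ) ^ 2 := hcs
      _ ≤ (n:ℝ)^2 * ∑ p ∈ univ.offDiag, (ccount G p : ℝ) ^ 2 :=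
          mul_le_mul_of_nonneg_right hcard hccnonneg
  have hTnum : T ≤ 8 * (numC4 G : ℝ) := by
    rw [hT]
    exact_mod_cast card_Q_le G
  set Q0 : ℝ := n * d ^ 2 - n * d with hQ0
  have hQ1 : d^2 - d ≥ 2.58 * n := by
    nlinarith [hd4n, hd28, mul_nonneg (by linarith : (0:ℝ) ≤ d) (by linarith : (0:ℝ) ≤ d - 2.828)]
  have hQ0big : 2.5 * (n:ℝ)^2 ≤ Q0 := by
    have := mul_le_mul_of_nonneg_left hQ1 (le_of_lt hn0)
    nlinarith [this]
  have hTlow : A ^ 2 / n ^ 2 - A ≤ T := by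
    rw [hTeq]
    have hdiv : A ^ 2 / n ^ 2 ≤ ∑ p ∈ univ.offDiag, (ccount G p : ℝ) ^ 2 := by
      rw [div_le_iff₀ (by positivity)]
      nlinarith [hCS2, hccnonneg]
    linarith
  have haux : (0:ℝ) ≤ A + Q0 - (n:ℝ)^2 := by nlinarith [hQ0big, hAlow]
  have hkey : (n:ℝ)^2 * (A - Q0) ≤ A^2 - Q0^2 := by
    nlinarith [mul_nonneg (sub_nonneg.2 hAlow) haux]
  have h3 : (A - Q0) ≤ (A^2 - Q0^2)/(n:ℝ)^2 := by
    rw [le_div_iff₀ (by positivity)]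
    linarith [hkey]
  have h4 : (A^2 - Q0^2)/(n:ℝ)^2 = A^2/(n:ℝ)^2 - Q0^2/(n:ℝ)^2 := sub_div _ _ _
  have hmono : Q0 ^ 2 / (n:ℝ) ^ 2 - Q0 ≤ T := by linarith
  have hQ0n : Q0 ^ 2 / (n:ℝ) ^ 2 = (d^2 - d)^2 := by
    rw [hQ0]
    field_simp
  rw [hQ0n] at hmono
  have h8 : (d^2-d)^2 - ((n:ℝ) * d^2 - (n:ℝ) * d) ≤ 8 * (numC4 G : ℝ) := by
    rw [← hQ0]
    linarith
  have hpos : (0:ℝ) ≤ d^2 - d := by nlinarith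
  have hq4 : (0:ℝ) ≤ d^2/4 - n := by linarith
  have hx : (0:ℝ) ≤ 19/36*d^2 - 7/4*d + 1 := by nlinarith [sq_nonneg (d - 2.828)]
  nlinarith [h8, mul_nonneg hpos hq4, mul_nonneg (sq_nonneg d) hx]
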